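/- Let N ∈ ℕ with N ≥ 1, let p00, p10, p01, p11 > 0 with p00 + p10 + p01 + p11 = 1, and let (X1, X2) be a random vector taking values in {0, 1, …, N}². Suppose that for every function f : {0, 1, …, N} × {0, 1, …, N} → ℝ both identities hold: p00 · E[X1 · f(X1, X2)] + p01 · E[X1 · f(X1, X2 + 1)] = p10 · E[(N − X1) · f(X1 + 1, X2)] + p11 · E[(N − X1) · f(X1 + 1, X2 + 1)] and p00 · E[X2 · f(X1, X2)] + p10 · E[X2 · f(X1 + 1, X2)] = p01 · E[(N − X2) · f(X1, X2 + 1)] + p11 · E[(N − X2) · f(X1 + 1, X2 + 1)]. Then (X1, X2) follows the bivariate binomial distribution BVB with these parameters; equivalently, its joint probability generating function satisfies E[s^{X1} t^{X2}] = (p00 + p10·s + p01·t + p11·s·t)^N for all s, t with |s|, |t| ≤ 1. -/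
import Mathlib


open scoped NNReal ENNReal

/-- Expectation of a real-valued function under a distribution on `ℕ × ℕ`. -/
noncomputable def pExp (p : PMF (ℕ × ℕ)) (g : ℕ × ℕ → ℝ) : ℝ :=
  ∑' q : ℕ × ℕ, (p q).toReal * g q

section SteinBVBAux

open Polynomial

lemma sbvb_lin_coeff_zero {R : Type*} [CommRing R] (a b : R) (G : R[X]) :
    ((C a + C b * X) * G).coeff 0 = a * G.coeff 0 := by
  rw [show (C a + C b * X) * G = C a * G + C b * (X * G) by ring]
  simp [coeff_C_mul, mul_coeff_zero]

lemma sbvb_lin_coeff_succ {R : Type*} [CommRing R] (a b : R) (G : R[X]) (j : ℕ) :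
    ((C a + C b * X) * G).coeff (j + 1) = a * G.coeff (j + 1) + b * G.coeff j := by
  rw [show (C a + C b * X) * G = C a * G + C b * (X * G) by ring]
  simp [coeff_C_mul, coeff_X_mul]

lemma sbvb_deriv_lin {R : Type*} [CommRing R] (a b : R) :
    derivative (C a + C b * X) = C b := by simp

lemma sbvb_lin_pow_deriv {R : Type*} [CommRing R] (a b : R) (n : ℕ) (hn : 1 ≤ n) :
    (C a + C b * X) * derivative ((C a + C b * X) ^ n)
      = C (n : R) * (C b * (C a + C b * X) ^ n) := by
  rw [derivative_pow, sbvb_deriv_lin]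
  have h : (C a + C b * X) * (C a + C b * X) ^ (n - 1) = (C a + C b * X) ^ n := by
    rw [← pow_succ']
    congr 1
    omega
  calc (C a + C b * X) * (C (n:R) * (C a + C b * X) ^ (n-1) * C b)
      = C (n:R) * (C b * ((C a + C b * X) * (C a + C b * X) ^ (n-1))) := by ring
    _ = C (n:R) * (C b * (C a + C b * X) ^ n) := by rw [h]

lemma sbvb_E_gen {R : Type*} [CommRing R] (a b : R) (n : ℕ) (hn : 1 ≤ n) (i : ℕ) :
    a * (((C a + C b * X) ^ n).coeff (i + 1) * ((i : R) + 1))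
      + b * (((C a + C b * X) ^ n).coeff i * (i : R))
      = (n : R) * (b * ((C a + C b * X) ^ n).coeff i) := by
  have hid := sbvb_lin_pow_deriv a b n hn
  cases i with
  | zero =>
    have h0 := congrArg (fun F => Polynomial.coeff F 0) hid
    simp only [sbvb_lin_coeff_zero, coeff_C_mul, coeff_derivative] at h0
    push_cast at h0 ⊢
    linear_combination h0
  | succ k =>
    have h0 := congrArg (fun F => Polynomial.coeff F (k + 1)) hid
    simp only [sbvb_lin_coeff_succ, coeff_C_mul, coeff_derivative] at h0
    push_cast at h0 ⊢
    linear_combination h0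

/-- Bivariate generating polynomial `w + x s + y t + z s t` as element of `(ℝ[X])[X]`,
with the outer variable `s` and inner variable `t`. -/
noncomputable def sbvbP (w x y z : ℝ) : Polynomial (Polynomial ℝ) :=
  C (C w + C y * X) + C (C x + C z * X) * X

/-- Coefficient of `s^i t^j` in `(w + x s + y t + z s t)^N`. -/
noncomputable def sbvbCf (w x y z : ℝ) (N i j : ℕ) : ℝ :=
  (((sbvbP w x y z) ^ N).coeff i).coeff j

lemma sbvb_coeff_zero_pow {R : Type*} [CommRing R] (p : R[X]) (n : ℕ) :
    (p ^ n).coeff 0 = (p.coeff 0) ^ n := by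
  have := map_pow (constantCoeff (R := R)) p n
  simpa [constantCoeff_apply] using this

lemma sbvbCf_zero_zero (w x y z : ℝ) (N : ℕ) : sbvbCf w x y z N 0 0 = w ^ N := by
  unfold sbvbCf sbvbP
  rw [sbvb_coeff_zero_pow]
  simp [sbvb_coeff_zero_pow]

lemma sbvb_natCast_eq_C (i : ℕ) : ((i : ℝ[X]) + 1) = C ((i:ℝ) + 1) := by
  rw [C_add, C_1, C_eq_natCast]

lemma sbvbCf_rec0 (w x y z : ℝ) (N : ℕ) (hn : 1 ≤ N) (j : ℕ) :
    w * ((j:ℝ)+1) * sbvbCf w x y z N 0 (j+1) = ((N:ℝ) - j) * y * sbvbCf w x y z N 0 j := by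
  have hb0 : ((sbvbP w x y z) ^ N).coeff 0 = (C w + C y * X) ^ N := by
    unfold sbvbP; rw [sbvb_coeff_zero_pow]; simp [sbvb_lin_coeff_zero]
  have hE := sbvb_E_gen w y N hn j
  unfold sbvbCf
  rw [hb0]
  linear_combination hE

lemma sbvbCf_rec1 (w x y z : ℝ) (N : ℕ) (hn : 1 ≤ N) (i j : ℕ) :
    w * ((i:ℝ)+1) * sbvbCf w x y z N (i+1) (j+1) + y * ((i:ℝ)+1) * sbvbCf w x y z N (i+1) j
      = ((N:ℝ) - i) * (x * sbvbCf w x y z N i (j+1) + z * sbvbCf w x y z N i j) := by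
  have hE := sbvb_E_gen (C w + C y * X) (C x + C z * X) N hn i
  rw [sbvb_natCast_eq_C] at hE
  simp only [← C_eq_natCast] at hE
  have h := congrArg (fun F => Polynomial.coeff F (j+1)) hE
  simp only [coeff_add, sbvb_lin_coeff_succ, coeff_mul_C, coeff_C_mul] at h
  unfold sbvbCf sbvbP
  linear_combination h

lemma sbvbCf_rec1z (w x y z : ℝ) (N : ℕ) (hn : 1 ≤ N) (i : ℕ) :
    w * ((i:ℝ)+1) * sbvbCf w x y z N (i+1) 0 = ((N:ℝ) - i) * x * sbvbCf w x y z N i 0 := by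
  have hE := sbvb_E_gen (C w + C y * X) (C x + C z * X) N hn i
  rw [sbvb_natCast_eq_C] at hE
  simp only [← C_eq_natCast] at hE
  have h := congrArg (fun F => Polynomial.coeff F 0) hE
  simp only [coeff_add, sbvb_lin_coeff_zero, coeff_mul_C, coeff_C_mul] at h
  unfold sbvbCf sbvbP
  linear_combination h

lemma sbvb_lin_natDegree {R : Type*} [CommRing R] (a b : R) :
    (C a + C b * X).natDegree ≤ 1 := by
  refine le_trans (natDegree_add_le _ _) (max_le (by simp) ?_)
  refine le_trans natDegree_mul_le ?_
  simp [natDegree_X_le]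

lemma sbvbP_pow_natDegree (w x y z : ℝ) (N : ℕ) : ((sbvbP w x y z) ^ N).natDegree ≤ N := by
  refine le_trans natDegree_pow_le ?_
  have : (sbvbP w x y z).natDegree ≤ 1 := sbvb_lin_natDegree _ _
  calc N * (sbvbP w x y z).natDegree ≤ N * 1 := Nat.mul_le_mul_left N this
    _ = N := Nat.mul_one N

lemma sbvbCf_inner_bound (w x y z : ℝ) :
    ∀ n i : ℕ, (((sbvbP w x y z) ^ n).coeff i).natDegree ≤ n := by
  intro n
  induction n with
  | zero =>
    intro i
    cases i <;> simp [coeff_one]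
  | succ n ih =>
    intro i
    rw [pow_succ']
    unfold sbvbP
    cases i with
    | zero =>
      rw [sbvb_lin_coeff_zero]
      refine le_trans natDegree_mul_le ?_
      have := sbvb_lin_natDegree w y
      have h2 := ih 0
      unfold sbvbP at h2
      omega
    | succ k =>
      rw [sbvb_lin_coeff_succ]
      refine le_trans (natDegree_add_le _ _) ?_
      have h1 : ((C w + C y * X) * (((C (C w + C y * X) + C (C x + C z * X) * X)) ^ n).coeff (k+1)).natDegree ≤ n + 1 := by
        refine le_trans natDegree_mul_le ?_
        have := sbvb_lin_natDegree w y
        have h2 := ih (k+1); unfold sbvbP at h2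
        omega
      have h2 : ((C x + C z * X) * (((C (C w + C y * X) + C (C x + C z * X) * X)) ^ n).coeff k).natDegree ≤ n + 1 := by
        refine le_trans natDegree_mul_le ?_
        have := sbvb_lin_natDegree x z
        have h2 := ih k; unfold sbvbP at h2
        omega
      omega

lemma sbvbCf_eval (w x y z : ℝ) (N : ℕ) (s t : ℝ) :
    ∑ i ∈ Finset.range (N+1), ∑ j ∈ Finset.range (N+1), sbvbCf w x y z N i j * s^i * t^j
      = (w + x*s + y*t + z*s*t)^N := by
  have hout : (((sbvbP w x y z) ^ N).map (evalRingHom t)).natDegree < N + 1 :=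
    lt_of_le_of_lt (le_trans natDegree_map_le (sbvbP_pow_natDegree w x y z N)) (Nat.lt_succ_self N)
  calc ∑ i ∈ Finset.range (N+1), ∑ j ∈ Finset.range (N+1), sbvbCf w x y z N i j * s^i * t^j
      = ∑ i ∈ Finset.range (N+1), (∑ j ∈ Finset.range (N+1), sbvbCf w x y z N i j * t^j) * s^i := by
        refine Finset.sum_congr rfl fun i _ => ?_
        rw [Finset.sum_mul]
        exact Finset.sum_congr rfl fun j _ => by ring
    _ = eval s (((sbvbP w x y z) ^ N).map (evalRingHom t)) := by
        rw [eval_eq_sum_range' hout s]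
        refine Finset.sum_congr rfl fun i _ => ?_
        congr 1
        rw [coeff_map, coe_evalRingHom,
          eval_eq_sum_range' (lt_of_le_of_lt (sbvbCf_inner_bound w x y z N i) (Nat.lt_succ_self N)) t]
        rfl
    _ = ((w + y*t) + (x + z*t)*s)^N := by
        rw [Polynomial.map_pow, eval_pow]
        congr 1
        unfold sbvbP
        rw [Polynomial.map_add, Polynomial.map_mul, map_C, map_C, Polynomial.map_X]
        simp [coe_evalRingHom]
    _ = (w + x*s + y*t + z*s*t)^N := by ring

lemma sbvb_unique (N : ℕ) (p00 p10 p01 p11 : ℝ) (h00 : p00 ≠ 0)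
    (a c : ℕ → ℕ → ℝ)
    (ha0 : ∀ j : ℕ, p00 * ((j:ℝ)+1) * a 0 (j+1) = ((N:ℝ) - j) * p01 * a 0 j)
    (ha1 : ∀ i j : ℕ, p00 * ((i:ℝ)+1) * a (i+1) (j+1) + p01 * ((i:ℝ)+1) * a (i+1) j
        = ((N:ℝ) - i) * (p10 * a i (j+1) + p11 * a i j))
    (haz : ∀ i : ℕ, p00 * ((i:ℝ)+1) * a (i+1) 0 = ((N:ℝ) - i) * p10 * a i 0)
    (hc0 : ∀ j : ℕ, p00 * ((j:ℝ)+1) * c 0 (j+1) = ((N:ℝ) - j) * p01 * c 0 j)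
    (hc1 : ∀ i j : ℕ, p00 * ((i:ℝ)+1) * c (i+1) (j+1) + p01 * ((i:ℝ)+1) * c (i+1) j
        = ((N:ℝ) - i) * (p10 * c i (j+1) + p11 * c i j))
    (hcz : ∀ i : ℕ, p00 * ((i:ℝ)+1) * c (i+1) 0 = ((N:ℝ) - i) * p10 * c i 0) :
    ∀ i j : ℕ, c 0 0 * a i j = a 0 0 * c i j := by
  intro i
  induction i with
  | zero =>
    intro j
    induction j with
    | zero => ring
    | succ j ihj =>
      have hne : p00 * ((j:ℝ)+1) ≠ 0 := mul_ne_zero h00 (by positivity)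
      refine mul_left_cancel₀ hne ?_
      linear_combination c 0 0 * ha0 j - a 0 0 * hc0 j + ((N:ℝ) - j) * p01 * ihj
  | succ i ih =>
    intro j
    have hne : ∀ k : ℕ, p00 * ((k:ℝ)+1) ≠ 0 := fun k => mul_ne_zero h00 (by positivity)
    induction j with
    | zero =>
      refine mul_left_cancel₀ (hne i) ?_
      linear_combination c 0 0 * haz i - a 0 0 * hcz i + ((N:ℝ) - i) * p10 * ih 0
    | succ j ihj =>
      refine mul_left_cancel₀ (hne i) ?_
      linear_combination c 0 0 * ha1 i j - a 0 0 * hc1 i j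
        + ((N:ℝ) - i) * p10 * ih (j+1) + ((N:ℝ) - i) * p11 * ih j
        - p01 * ((i:ℝ)+1) * ihj

lemma sbvb_pExp_single (p : PMF (ℕ × ℕ)) (g : ℕ × ℕ → ℝ) (q0 : ℕ × ℕ)
    (h : ∀ q : ℕ × ℕ, q ≠ q0 → g q = 0) : pExp p g = (p q0).toReal * g q0 :=
  tsum_eq_single q0 (fun b hb => by rw [h b hb, mul_zero])

lemma sbvb_pExp_zero (p : PMF (ℕ × ℕ)) (g : ℕ × ℕ → ℝ)
    (h : ∀ q : ℕ × ℕ, g q = 0) : pExp p g = 0 := by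
  unfold pExp
  simp only [h, mul_zero, tsum_zero]

end SteinBVBAux

theorem stein_bvb_converse (N : ℕ) (hN : 1 ≤ N) (p00 p10 p01 p11 : ℝ≥0)
    (h00 : 0 < p00) (h10 : 0 < p10) (h01 : 0 < p01) (h11 : 0 < p11)
    (hsum : p00 + p10 + p01 + p11 = 1)
    (p : PMF (ℕ × ℕ))
    (hrange : ∀ q : ℕ × ℕ, p q ≠ 0 → q.1 ≤ N ∧ q.2 ≤ N)
    (hstein1 : ∀ f : ℕ × ℕ → ℝ,
      (p00 : ℝ) * pExp p (fun q => (q.1 : ℝ) * f q)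
          + (p01 : ℝ) * pExp p (fun q => (q.1 : ℝ) * f (q.1, q.2 + 1))
        = (p10 : ℝ) * pExp p (fun q => ((N : ℝ) - (q.1 : ℝ)) * f (q.1 + 1, q.2))
          + (p11 : ℝ) * pExp p (fun q => ((N : ℝ) - (q.1 : ℝ)) * f (q.1 + 1, q.2 + 1)))
    (hstein2 : ∀ f : ℕ × ℕ → ℝ,
      (p00 : ℝ) * pExp p (fun q => (q.2 : ℝ) * f q)
          + (p10 : ℝ) * pExp p (fun q => (q.2 : ℝ) * f (q.1 + 1, q.2))
        = (p01 : ℝ) * pExp p (fun q => ((N : ℝ) - (q.2 : ℝ)) * f (q.1, q.2 + 1))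
          + (p11 : ℝ) * pExp p (fun q => ((N : ℝ) - (q.2 : ℝ)) * f (q.1 + 1, q.2 + 1))) :
    ∀ s t : ℝ, |s| ≤ 1 → |t| ≤ 1 →
      (∑' q : ℕ × ℕ, (p q).toReal * s ^ q.1 * t ^ q.2)
        = ((p00 : ℝ) + (p10 : ℝ) * s + (p01 : ℝ) * t + (p11 : ℝ) * s * t) ^ N := by
  intro s t hs ht
  set a : ℕ → ℕ → ℝ := fun i j => (p (i, j)).toReal with ha_def
  set c : ℕ → ℕ → ℝ := sbvbCf (p00:ℝ) (p10:ℝ) (p01:ℝ) (p11:ℝ) N with hc_def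
  have hw : (0:ℝ) < (p00:ℝ) := by exact_mod_cast h00
  -- Stein recurrences for `a`, extracted with indicator test functions
  have ha1 : ∀ i j : ℕ, (p00:ℝ) * ((i:ℝ)+1) * a (i+1) (j+1) + (p01:ℝ) * ((i:ℝ)+1) * a (i+1) j
      = ((N:ℝ) - i) * ((p10:ℝ) * a i (j+1) + (p11:ℝ) * a i j) := by
    intro i j
    have h := hstein1 (fun q => if q = (i+1, j+1) then (1:ℝ) else 0)
    beta_reduce at h
    have e1 : pExp p (fun q : ℕ×ℕ => (q.1:ℝ) * if q = (i+1, j+1) then (1:ℝ) else 0)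
        = (p (i+1, j+1)).toReal * ((i:ℝ)+1) := by
      rw [sbvb_pExp_single p _ (i+1, j+1) (fun q hq => by rw [if_neg hq, mul_zero])]
      push_cast
      simp
    have e2 : pExp p (fun q : ℕ×ℕ => (q.1:ℝ) * if (q.1, q.2+1) = (i+1, j+1) then (1:ℝ) else 0)
        = (p (i+1, j)).toReal * ((i:ℝ)+1) := by
      rw [sbvb_pExp_single p _ (i+1, j) ?_]
      · push_cast; simp
      · rintro ⟨q1, q2⟩ hq
        rw [if_neg, mul_zero]
        simp only [Prod.mk.injEq, ne_eq] at hq ⊢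
        omega
    have e3 : pExp p (fun q : ℕ×ℕ => ((N:ℝ) - (q.1:ℝ)) * if (q.1+1, q.2) = (i+1, j+1) then (1:ℝ) else 0)
        = (p (i, j+1)).toReal * ((N:ℝ) - i) := by
      rw [sbvb_pExp_single p _ (i, j+1) ?_]
      · simp
      · rintro ⟨q1, q2⟩ hq
        rw [if_neg, mul_zero]
        simp only [Prod.mk.injEq, ne_eq] at hq ⊢
        omega
    have e4 : pExp p (fun q : ℕ×ℕ => ((N:ℝ) - (q.1:ℝ)) * if (q.1+1, q.2+1) = (i+1, j+1) then (1:ℝ) else 0)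
        = (p (i, j)).toReal * ((N:ℝ) - i) := by
      rw [sbvb_pExp_single p _ (i, j) ?_]
      · simp
      · rintro ⟨q1, q2⟩ hq
        rw [if_neg, mul_zero]
        simp only [Prod.mk.injEq, ne_eq] at hq ⊢
        omega
    rw [e1, e2, e3, e4] at h
    simp only [ha_def]
    linear_combination h
  have haz : ∀ i : ℕ, (p00:ℝ) * ((i:ℝ)+1) * a (i+1) 0 = ((N:ℝ) - i) * (p10:ℝ) * a i 0 := by
    intro i
    have h := hstein1 (fun q => if q = (i+1, 0) then (1:ℝ) else 0)
    beta_reduce at h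
    have e1 : pExp p (fun q : ℕ×ℕ => (q.1:ℝ) * if q = (i+1, 0) then (1:ℝ) else 0)
        = (p (i+1, 0)).toReal * ((i:ℝ)+1) := by
      rw [sbvb_pExp_single p _ (i+1, 0) (fun q hq => by rw [if_neg hq, mul_zero])]
      push_cast
      simp
    have e2 : pExp p (fun q : ℕ×ℕ => (q.1:ℝ) * if (q.1, q.2+1) = (i+1, 0) then (1:ℝ) else 0)
        = 0 := by
      refine sbvb_pExp_zero p _ ?_
      rintro ⟨q1, q2⟩
      rw [if_neg, mul_zero]
      simp
    have e3 : pExp p (fun q : ℕ×ℕ => ((N:ℝ) - (q.1:ℝ)) * if (q.1+1, q.2) = (i+1, 0) then (1:ℝ) else 0)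
        = (p (i, 0)).toReal * ((N:ℝ) - i) := by
      rw [sbvb_pExp_single p _ (i, 0) ?_]
      · simp
      · rintro ⟨q1, q2⟩ hq
        rw [if_neg, mul_zero]
        simp only [Prod.mk.injEq, ne_eq] at hq ⊢
        omega
    have e4 : pExp p (fun q : ℕ×ℕ => ((N:ℝ) - (q.1:ℝ)) * if (q.1+1, q.2+1) = (i+1, 0) then (1:ℝ) else 0)
        = 0 := by
      refine sbvb_pExp_zero p _ ?_
      rintro ⟨q1, q2⟩
      rw [if_neg, mul_zero]
      simp
    rw [e1, e2, e3, e4] at h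
    simp only [ha_def]
    linear_combination h
  have ha0 : ∀ j : ℕ, (p00:ℝ) * ((j:ℝ)+1) * a 0 (j+1) = ((N:ℝ) - j) * (p01:ℝ) * a 0 j := by
    intro j
    have h := hstein2 (fun q => if q = (0, j+1) then (1:ℝ) else 0)
    beta_reduce at h
    have e1 : pExp p (fun q : ℕ×ℕ => (q.2:ℝ) * if q = (0, j+1) then (1:ℝ) else 0)
        = (p (0, j+1)).toReal * ((j:ℝ)+1) := by
      rw [sbvb_pExp_single p _ (0, j+1) (fun q hq => by rw [if_neg hq, mul_zero])]
      push_cast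
      simp
    have e2 : pExp p (fun q : ℕ×ℕ => (q.2:ℝ) * if (q.1+1, q.2) = (0, j+1) then (1:ℝ) else 0)
        = 0 := by
      refine sbvb_pExp_zero p _ ?_
      rintro ⟨q1, q2⟩
      rw [if_neg, mul_zero]
      simp
    have e3 : pExp p (fun q : ℕ×ℕ => ((N:ℝ) - (q.2:ℝ)) * if (q.1, q.2+1) = (0, j+1) then (1:ℝ) else 0)
        = (p (0, j)).toReal * ((N:ℝ) - j) := by
      rw [sbvb_pExp_single p _ (0, j) ?_]
      · simp
      · rintro ⟨q1, q2⟩ hq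
        rw [if_neg, mul_zero]
        simp only [Prod.mk.injEq, ne_eq] at hq ⊢
        omega
    have e4 : pExp p (fun q : ℕ×ℕ => ((N:ℝ) - (q.2:ℝ)) * if (q.1+1, q.2+1) = (0, j+1) then (1:ℝ) else 0)
        = 0 := by
      refine sbvb_pExp_zero p _ ?_
      rintro ⟨q1, q2⟩
      rw [if_neg, mul_zero]
      simp
    rw [e1, e2, e3, e4] at h
    simp only [ha_def]
    linear_combination h
  -- same recurrences for `c`
  have hc0 := fun j => sbvbCf_rec0 (p00:ℝ) (p10:ℝ) (p01:ℝ) (p11:ℝ) N hN j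
  have hc1 := fun i j => sbvbCf_rec1 (p00:ℝ) (p10:ℝ) (p01:ℝ) (p11:ℝ) N hN i j
  have hcz := fun i => sbvbCf_rec1z (p00:ℝ) (p10:ℝ) (p01:ℝ) (p11:ℝ) N hN i
  have key := sbvb_unique N (p00:ℝ) (p10:ℝ) (p01:ℝ) (p11:ℝ) (ne_of_gt hw) a c
    ha0 ha1 haz hc0 hc1 hcz
  -- all mass lives on the square
  have hvanish : ∀ q : ℕ × ℕ, q ∉ Finset.range (N+1) ×ˢ Finset.range (N+1) →
      (p q) = 0 := by
    intro q hq
    by_contra hne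
    obtain ⟨h1', h2'⟩ := hrange q hne
    simp only [Finset.mem_product, Finset.mem_range] at hq
    omega
  -- total masses
  have hsum_a : ∑ i ∈ Finset.range (N+1), ∑ j ∈ Finset.range (N+1), a i j = 1 := by
    have h1 : (∑' q : ℕ × ℕ, (p q).toReal) = 1 := by
      rw [← ENNReal.tsum_toReal_eq (fun q => PMF.apply_ne_top p q), PMF.tsum_coe]
      simp
    rw [tsum_eq_sum (s := Finset.range (N+1) ×ˢ Finset.range (N+1))
      (fun q hq => by rw [hvanish q hq]; simp), Finset.sum_product] at h1
    exact h1
  have hsum_c : ∑ i ∈ Finset.range (N+1), ∑ j ∈ Finset.range (N+1), c i j = 1 := by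
    have h1 := sbvbCf_eval (p00:ℝ) (p10:ℝ) (p01:ℝ) (p11:ℝ) N 1 1
    have h2 : ((p00:ℝ) + (p10:ℝ) * 1 + (p01:ℝ) * 1 + (p11:ℝ) * 1 * 1) = 1 := by
      push_cast
      have : (p00:ℝ) + (p10:ℝ) + (p01:ℝ) + (p11:ℝ) = 1 := by exact_mod_cast hsum
      linarith
    rw [show ((p00:ℝ) + (p10:ℝ)*1 + (p01:ℝ)*1 + (p11:ℝ)*1*1) = 1 from h2, one_pow] at h1
    simpa [hc_def] using h1
  have hc00 : c 0 0 = (p00:ℝ)^N := sbvbCf_zero_zero _ _ _ _ _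
  have hc00ne : c 0 0 ≠ 0 := by rw [hc00]; positivity
  have ha00 : a 0 0 = c 0 0 := by
    have hsumkey : c 0 0 * (∑ i ∈ Finset.range (N+1), ∑ j ∈ Finset.range (N+1), a i j)
        = a 0 0 * (∑ i ∈ Finset.range (N+1), ∑ j ∈ Finset.range (N+1), c i j) := by
      rw [Finset.mul_sum, Finset.mul_sum]
      refine Finset.sum_congr rfl fun i _ => ?_
      rw [Finset.mul_sum, Finset.mul_sum]
      exact Finset.sum_congr rfl fun j _ => key i j
    rw [hsum_a, hsum_c, mul_one, mul_one] at hsumkey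
    exact hsumkey.symm
  have hac : ∀ i j : ℕ, a i j = c i j := by
    intro i j
    have h := key i j
    rw [ha00] at h
    exact mul_left_cancel₀ hc00ne h
  -- conclude
  rw [tsum_eq_sum (s := Finset.range (N+1) ×ˢ Finset.range (N+1))
    (fun q hq => by rw [hvanish q hq]; simp), Finset.sum_product]
  calc ∑ i ∈ Finset.range (N+1), ∑ j ∈ Finset.range (N+1), (p (i, j)).toReal * s^i * t^j
      = ∑ i ∈ Finset.range (N+1), ∑ j ∈ Finset.range (N+1), c i j * s^i * t^j := by
        refine Finset.sum_congr rfl fun i _ => Finset.sum_congr rfl fun j _ => ?_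
        rw [show (p (i, j)).toReal = a i j from rfl, hac i j]
    _ = ((p00:ℝ) + (p10:ℝ) * s + (p01:ℝ) * t + (p11:ℝ) * s * t) ^ N :=
        sbvbCf_eval (p00:ℝ) (p10:ℝ) (p01:ℝ) (p11:ℝ) N s t
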